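/- arXiv:1502.03326 — 6 statements merged into one kernel-verified Lean document; each statement's English description precedes it below -/
import Mathlib

section
/- For every vertex P = (x,y,z) ∈ V lying in the quadrant Q₄ = {(x,y,z) : x ≥ |y| and x ≥ |z|}, one has h(P + (4,0,0)) = h(P) + 4. (Note P + (4,0,0) ∈ V whenever P ∈ V.) -/
/-- The sodalite vertex set: none of the six sums/differences of pairs of
coordinates is divisible by 4. -/
def SodVertex (p : ℤ × ℤ × ℤ) : Prop :=
  ¬ (4 ∣ p.1 + p.2.1) ∧ ¬ (4 ∣ p.1 - p.2.1) ∧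
  ¬ (4 ∣ p.2.1 + p.2.2) ∧ ¬ (4 ∣ p.2.1 - p.2.2) ∧
  ¬ (4 ∣ p.2.2 + p.1) ∧ ¬ (4 ∣ p.2.2 - p.1)

instance : DecidablePred SodVertex := fun p => by unfold SodVertex; infer_instance

/-- Vertices of the sodalite network. -/
abbrev SodVert := {p : ℤ × ℤ × ℤ // SodVertex p}

/-- Squared Euclidean distance between two points of ℤ³. -/
def sqDist (p q : ℤ × ℤ × ℤ) : ℤ :=
  (p.1 - q.1) ^ 2 + (p.2.1 - q.2.1) ^ 2 + (p.2.2 - q.2.2) ^ 2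

/-- The sodalite graph: vertices adjacent iff squared distance is 2. -/
def sodaliteGraph : SimpleGraph SodVert where
  Adj p q := sqDist p.1 q.1 = 2
  symm := by
    constructor
    intro p q h
    simp only [sqDist] at h ⊢
    ring_nf at h ⊢
    linarith
  loopless := by
    constructor
    intro p h
    simp [sqDist] at h

/-- The base vertex O = (0,1,2). -/
def sodO : SodVert := ⟨(0, 1, 2), by decide⟩

/-- The height of a vertex: graph distance from O. -/
noncomputable def dis (P : SodVert) : ℕ := sodaliteGraph.dist sodO P

/-- The canonical sector U. -/
def inU (p : ℤ × ℤ × ℤ) : Prop := p.1 ≥ p.2.1 ∧ p.2.1 ≥ p.2.2 ∧ p.2.2 ≥ 0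

/-- Number of vertices at height n. -/
noncomputable def S (n : ℤ) : ℕ :=
  Set.ncard {P : SodVert | (dis P : ℤ) = n}

/-- Number of vertices at height n on a coordinate plane. -/
noncomputable def Sbar (n : ℤ) : ℕ :=
  Set.ncard {P : SodVert | (dis P : ℤ) = n ∧ P.1.1 * P.1.2.1 * P.1.2.2 = 0}

/-- Number of vertices at height n in the sector U. -/
noncomputable def S2 (n : ℤ) : ℕ :=
  Set.ncard {P : SodVert | (dis P : ℤ) = n ∧ inU P.1}

/-- Number of vertices at height n in U on a coordinate plane. -/
noncomputable def Sbar1 (n : ℤ) : ℕ :=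
  Set.ncard {P : SodVert | (dis P : ℤ) = n ∧ inU P.1 ∧ P.1.1 * P.1.2.1 * P.1.2.2 = 0}

/-- Number of vertices at height n in U with z = 0 and x - 4 < y. -/
noncomputable def Sbar0 (n : ℤ) : ℕ :=
  Set.ncard {P : SodVert | (dis P : ℤ) = n ∧ inU P.1 ∧ P.1.2.2 = 0 ∧ P.1.1 - 4 < P.1.2.1}

/-- Number of vertices at height n in U with z < 2. -/
noncomputable def S1 (n : ℤ) : ℕ :=
  Set.ncard {P : SodVert | (dis P : ℤ) = n ∧ inU P.1 ∧ P.1.2.2 < 2}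

/-- Number of vertices at height n in U with z < 2 and y < 4. -/
noncomputable def S0 (n : ℤ) : ℕ :=
  Set.ncard {P : SodVert | (dis P : ℤ) = n ∧ inU P.1 ∧ P.1.2.2 < 2 ∧ P.1.2.1 < 4}

/-- Sign function. -/
def sig (a : ℤ) : ℤ := Int.sign a

/-- The explicit height function h. -/
def hFun (p : ℤ × ℤ × ℤ) : ℤ :=
  let x := p.1; let y := p.2.1; let z := p.2.2
  -- (x',y',z') : (|x|,|y|,|z|) sorted into weakly decreasing order
  let x' := max |x| (max |y| |z|)
  let z' := min |x| (min |y| |z|)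
  let y' := |x| + |y| + |z| - x' - z'
  let u : ℤ := if y' % 4 = 0 then 0 else if y' % 4 = 1 then 1
               else if y' % 4 = 2 then 0 else -1
  let v : ℤ := if x' % 4 = 0 then 1 else if x' % 4 = 1 then 0
               else if x' % 4 = 2 then -1 else 0
  let s := u * v
  -- h' = x' + y'/2 - s/2, an integer on vertices
  let h' := x' + (y' - s) / 2
  let c : ℤ :=
    if |x| ≥ |y| ∧ |y| ≥ |z| then 0
    else if |x| ≥ |z| ∧ |z| ≥ |y| then -(sig z)
    else if |y| ≥ |x| ∧ |x| ≥ |z| then -(sig y)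
    else if |y| ≥ |z| ∧ |z| ≥ |x| ∧ y * z ≤ 0 then 0
    else if |y| ≥ |z| ∧ |z| ≥ |x| ∧ y * z ≥ 0 then -2 * sig z
    else if |z| ≥ |x| ∧ |x| ≥ |y| then -2 * sig z
    else if |z| ≥ |y| ∧ |y| ≥ |x| ∧ y * z ≤ 0 then -(sig z)
    else -3 * sig y
  h' + c

/-- The quadrant associated with the translation T₃ = +(2,2,2). -/
def inQ3 (p : ℤ × ℤ × ℤ) : Prop :=
  p.1 + p.2.1 ≥ 0 ∧ p.2.1 + p.2.2 ≥ 0 ∧ p.2.2 + p.1 ≥ 0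

/-- The quadrant associated with the translation T₄ = +(4,0,0). -/
def inQ4 (p : ℤ × ℤ × ℤ) : Prop :=
  p.1 ≥ |p.2.1| ∧ p.1 ≥ |p.2.2|

/-- The quadrant associated with the translation T₆ = +(4,4,0). -/
def inQ6 (p : ℤ × ℤ × ℤ) : Prop :=
  p.2.1 ≥ |p.2.2| ∧ p.1 ≥ p.2.1 + |p.2.2|

/-- Within its quadrant, the translation T₄ = +(4,0,0) respects h, adding 4. -/
theorem hFun_T4 (p : ℤ × ℤ × ℤ) (hV : SodVertex p) (hQ : inQ4 p) :
    hFun (p + (4, 0, 0)) = hFun p + 4 := by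

  obtain ⟨x, y, z⟩ := p
  obtain ⟨h1, h2, h3, h4, h5, h6⟩ := hV
  obtain ⟨q1, q2⟩ := hQ
  simp only [inQ4] at *
  have hx0 : 0 ≤ x := le_trans (abs_nonneg y) q1
  have hy : |y| < x := by
    rcases q1.lt_or_eq with h | h
    · exact h
    · exfalso
      rcases (abs_eq hx0).mp h with h' | h'
      · exact h2 (h' ▸ ⟨0, by ring⟩)
      · exact h1 (h' ▸ ⟨0, by ring⟩)
  have hz : |z| < x := by
    rcases q2.lt_or_eq with h | h
    · exact h
    · exfalso
      rcases (abs_eq hx0).mp h with h' | h'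
      · exact h6 (h' ▸ ⟨0, by ring⟩)
      · exact h5 (h' ▸ ⟨0, by ring⟩)
  simp only [hFun, Prod.mk_add_mk, add_zero, Prod.fst, Prod.snd]
  rw [abs_of_nonneg hx0, abs_of_nonneg (show (0:ℤ) ≤ x + 4 by omega)]
  generalize hA : |y| = a at hy ⊢
  generalize hB : |z| = b at hz ⊢
  have m1 : (x + 4) ⊔ (a ⊔ b) = x + 4 := by omega
  have m2 : x ⊔ (a ⊔ b) = x := by omega
  have m3 : (x + 4) ⊓ (a ⊓ b) = a ⊓ b := by omega
  have m4 : x ⊓ (a ⊓ b) = a ⊓ b := by omega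
  rw [m1, m2, m3, m4]
  have y1 : x + 4 + a + b - (x + 4) - a ⊓ b = a + b - a ⊓ b := by ring
  have y2 : x + a + b - x - a ⊓ b = a + b - a ⊓ b := by ring
  rw [y1, y2, show (x + 4) % 4 = x % 4 by omega]
  rcases le_or_gt b a with hab | hab
  · rw [if_pos (show x + 4 ≥ a ∧ a ≥ b from ⟨by omega, hab⟩), if_pos (show x ≥ a ∧ a ≥ b from ⟨by omega, hab⟩)]
    ring
  · rw [if_neg (show ¬(x + 4 ≥ a ∧ a ≥ b) from by omega), if_neg (show ¬(x ≥ a ∧ a ≥ b) from by omega), if_pos (show x + 4 ≥ b ∧ b ≥ a from ⟨by omega, hab.le⟩),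
      if_pos (show x ≥ b ∧ b ≥ a from ⟨by omega, hab.le⟩)]
    ring
end

section
/- For every vertex P = (x,y,z) ∈ V lying in the quadrant Q₆ = {(x,y,z) : y ≥ |z| and x ≥ y + |z|}, one has h(P + (4,4,0)) = h(P) + 6. (Note P + (4,4,0) ∈ V whenever P ∈ V.) -/
/-- Within its quadrant, the translation T₆ = +(4,4,0) respects h, adding 6. -/
theorem hFun_T6 (p : ℤ × ℤ × ℤ) (hV : SodVertex p) (hQ : inQ6 p) :
    hFun (p + (4, 4, 0)) = hFun p + 6 := by
  obtain ⟨x, y, z⟩ := p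
  obtain ⟨hq1, hq2⟩ := hQ
  simp only [inQ6] at hq1 hq2
  have hw : (0:ℤ) ≤ |z| := abs_nonneg z
  have hy : |y| = y := abs_of_nonneg (by omega)
  have hx : |x| = x := abs_of_nonneg (by omega)
  have hy4 : |y + 4| = y + 4 := abs_of_nonneg (by omega)
  have hx4 : |x + 4| = x + 4 := abs_of_nonneg (by omega)
  show hFun (x + 4, y + 4, z + 0) = hFun (x, y, z) + 6
  rw [add_zero]
  simp only [hFun, hx, hy, hx4, hy4]
  have hmax : max x (max y |z|) = x := max_eq_left (max_le (by omega) (by omega))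
  have hmax4 : max (x + 4) (max (y + 4) |z|) = x + 4 :=
    max_eq_left (max_le (by omega) (by omega))
  have hmin : min x (min y |z|) = |z| := by
    rw [min_eq_right (by omega : |z| ≤ y), min_eq_right (by omega : |z| ≤ x)]
  have hmin4 : min (x + 4) (min (y + 4) |z|) = |z| := by
    rw [min_eq_right (by omega : |z| ≤ y + 4), min_eq_right (by omega : |z| ≤ x + 4)]
  rw [hmax, hmax4, hmin, hmin4]
  have e1 : x + 4 + (y + 4) + |z| - (x + 4) - |z| = y + 4 := by ring
  have e2 : x + y + |z| - x - |z| = y := by ring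
  rw [e1, e2]
  have m1 : (y + 4) % 4 = y % 4 := by omega
  have m2 : (x + 4) % 4 = x % 4 := by omega
  rw [m1, m2]
  rw [if_pos (⟨by omega, by omega⟩ : x + 4 ≥ y + 4 ∧ y + 4 ≥ |z|)]
  rw [if_pos (⟨by omega, by omega⟩ : x ≥ y ∧ y ≥ |z|)]
  split_ifs <;> omega
end

section
/- Let P = (x,y,z) ∈ V ∩ U with h(P) ≥ 15. Then at least one of the following holds: (i) P, P − (2,2,2), every neighbour Q of P in G, and every Q − (2,2,2) for Q a neighbour of P all lie in the quadrant Q₃ = {(x,y,z) : x+y ≥ 0, y+z ≥ 0, z+x ≥ 0}; or (ii) P, P − (4,0,0), every neighbour Q of P in G, and every Q − (4,0,0) for Q a neighbour of P all lie in the quadrant Q₄ = {(x,y,z) : x ≥ |y| and x ≥ |z|}. -/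

lemma hFun_bound_aux (x y z : ℤ) (h1 : x ≥ y) (h2 : y ≥ z) (h3 : z ≥ 0) :
    2 * hFun (x, y, z) ≤ 2 * x + y + 1 := by
  have hax : |x| = x := abs_of_nonneg (by linarith)
  have hay : |y| = y := abs_of_nonneg (by linarith)
  have haz : |z| = z := abs_of_nonneg h3
  simp only [hFun, hax, hay, haz]
  have e1 : max x (max y z) = x := by omega
  have e2 : min x (min y z) = z := by omega
  rw [e1, e2]
  rw [if_pos (⟨h1, h2⟩ : x ≥ y ∧ y ≥ z)]
  split_ifs <;> omega

lemma nb_bound (a b c : ℤ) (h : a ^ 2 + b ^ 2 + c ^ 2 = 2) :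
    (-1 ≤ a ∧ a ≤ 1) ∧ (-1 ≤ b ∧ b ≤ 1) ∧ (-1 ≤ c ∧ c ≤ 1) := by
  refine ⟨⟨?_, ?_⟩, ⟨?_, ?_⟩, ⟨?_, ?_⟩⟩ <;>
    nlinarith [sq_nonneg a, sq_nonneg b, sq_nonneg c, sq_nonneg (a - 1),
      sq_nonneg (a + 1), sq_nonneg (b - 1), sq_nonneg (b + 1),
      sq_nonneg (c - 1), sq_nonneg (c + 1)]

/-- For a vertex `P ∈ U` with `h(P) ≥ 15`, the point `P`, its image under the
inverse translation, its neighbours, and their images under the inverse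
translation all lie in one quadrant (either the T₃ or the T₄ quadrant). -/
theorem sodalite_translation_sector (P : SodVert) (hU : inU P.1)
    (hh : 15 ≤ hFun P.1) :
    (inQ3 P.1 ∧ inQ3 (P.1 - (2, 2, 2)) ∧
      ∀ Q : SodVert, sodaliteGraph.Adj P Q → inQ3 Q.1 ∧ inQ3 (Q.1 - (2, 2, 2))) ∨
    (inQ4 P.1 ∧ inQ4 (P.1 - (4, 0, 0)) ∧
      ∀ Q : SodVert, sodaliteGraph.Adj P Q → inQ4 Q.1 ∧ inQ4 (Q.1 - (4, 0, 0))) := by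
  obtain ⟨⟨x, y, z⟩, hV⟩ := P
  obtain ⟨h1, h2, h3⟩ := hU
  simp only at h1 h2 h3
  have hb := hFun_bound_aux x y z h1 h2 h3
  have hkey : 2 * x + y ≥ 29 := by
    have : (15 : ℤ) ≤ hFun (x, y, z) := hh
    omega
  by_cases hc : y + z ≥ 6
  · left
    refine ⟨⟨by simp; omega, by simp; omega, by simp; omega⟩,
      ⟨by simp [Prod.sub_def, inQ3]; omega, by simp [Prod.sub_def, inQ3]; omega,
       by simp [Prod.sub_def, inQ3]; omega⟩, ?_⟩
    intro Q hQ
    obtain ⟨⟨qx, qy, qz⟩, hQV⟩ := Q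
    have hd : (x - qx) ^ 2 + (y - qy) ^ 2 + (z - qz) ^ 2 = 2 := hQ
    have hnb := nb_bound _ _ _ hd
    constructor <;> refine ⟨?_, ?_, ?_⟩ <;> simp [inQ3, Prod.sub_def] <;> omega
  · right
    have hy5 : y ≤ 5 := by omega
    have hx12 : x ≥ 12 := by omega
    have haz : |z| = z := abs_of_nonneg h3
    have hay : |y| = y := abs_of_nonneg (by linarith)
    refine ⟨⟨by simp [inQ4]; omega, by simp [inQ4]; omega⟩,
      ⟨?_, ?_⟩, ?_⟩
    · simp [inQ4, Prod.sub_def]; omega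
    · simp [inQ4, Prod.sub_def]; omega
    intro Q hQ
    obtain ⟨⟨qx, qy, qz⟩, hQV⟩ := Q
    have hd : (x - qx) ^ 2 + (y - qy) ^ 2 + (z - qz) ^ 2 = 2 := hQ
    have hnb := nb_bound _ _ _ hd
    have haqy : |qy| ≤ y + 1 := abs_le.mpr ⟨by omega, by omega⟩
    have haqz : |qz| ≤ z + 1 := abs_le.mpr ⟨by omega, by omega⟩
    constructor <;> refine ⟨?_, ?_⟩ <;> simp [inQ4, Prod.sub_def] <;> omega
end

section
/- There exists an integer N such that for every integer n ≥ N, S̄₁(n) = S̄₁(n−4) + S̄₀(n). -/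
def svFun (x y : ℤ) : ℤ := if y % 2 = 1 ∧ x % 2 = 0 then 2 - (x + y) % 4 else 0
def psiFun (x y : ℤ) : ℤ := x + (y - svFun x y) / 2

lemma sq_natAbs (u : ℤ) (h1 : -1 ≤ u) (h2 : u ≤ 1) : u * u = (u.natAbs : ℤ) := by
  interval_cases u <;> decide

lemma adj_cases (x y z a b c : ℤ) (h : (x-a)^2+(y-b)^2+(z-c)^2 = 2) :
    ((x-a).natAbs ≤ 1 ∧ (y-b).natAbs ≤ 1 ∧ (z-c).natAbs ≤ 1) ∧
    (x-a).natAbs + (y-b).natAbs + (z-c).natAbs = 2 := by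
  have hx2 : (x-a)^2 ≤ 2 := by nlinarith [sq_nonneg (y-b), sq_nonneg (z-c)]
  have hy2 : (y-b)^2 ≤ 2 := by nlinarith [sq_nonneg (x-a), sq_nonneg (z-c)]
  have hz2 : (z-c)^2 ≤ 2 := by nlinarith [sq_nonneg (x-a), sq_nonneg (y-b)]
  have e1 : -1 ≤ x - a ∧ x - a ≤ 1 := by constructor <;> nlinarith
  have e2 : -1 ≤ y - b ∧ y - b ≤ 1 := by constructor <;> nlinarith
  have e3 : -1 ≤ z - c ∧ z - c ≤ 1 := by constructor <;> nlinarith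
  have h4 : ((x-a).natAbs : ℤ) + ((y-b).natAbs : ℤ) + ((z-c).natAbs : ℤ) = 2 := by
    rw [← sq_natAbs _ e1.1 e1.2, ← sq_natAbs _ e2.1 e2.2, ← sq_natAbs _ e3.1 e3.2]
    linear_combination h
  omega

set_option maxHeartbeats 4000000 in
lemma psiFun_lip (x y z a b c : ℤ) (hp : SodVertex (x,y,z)) (hq : SodVertex (a,b,c))
    (h : (x-a)^2+(y-b)^2+(z-c)^2 = 2) : psiFun a b ≤ psiFun x y + 1 := by
  obtain ⟨p1,p2,p3,p4,p5,p6⟩ := hp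
  obtain ⟨q1,q2,q3,q4,q5,q6⟩ := hq
  simp only at p1 p2 p3 p4 p5 p6 q1 q2 q3 q4 q5 q6
  obtain ⟨⟨hb1, hb2, hb3⟩, hd⟩ := adj_cases x y z a b c h
  clear h
  have d1 : a = x - 1 ∨ a = x ∨ a = x + 1 := by omega
  have d2 : b = y - 1 ∨ b = y ∨ b = y + 1 := by omega
  have d3 : c = z - 1 ∨ c = z ∨ c = z + 1 := by omega
  rcases d1 with h1|h1|h1 <;> rcases d2 with h2|h2|h2 <;> rcases d3 with h3|h3|h3 <;>
    subst h1 <;> subst h2 <;> subst h3 <;>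
    (unfold psiFun svFun; split_ifs <;> omega)

lemma sodVertex_mk (a b c : ℤ) (h1 : ¬(4 ∣ a + b)) (h2 : ¬(4 ∣ a - b)) (h3 : ¬(4 ∣ b + c))
    (h4 : ¬(4 ∣ b - c)) (h5 : ¬(4 ∣ c + a)) (h6 : ¬(4 ∣ c - a)) : SodVertex (a,b,c) :=
  ⟨h1,h2,h3,h4,h5,h6⟩

set_option maxHeartbeats 4000000 in
lemma descent (x y z : ℤ) (hv : SodVertex (x,y,z)) (hz0 : 0 ≤ z) (hz2 : z ≤ 2)
    (hy0 : 0 ≤ y) (hx0 : 0 ≤ x) (hyx : y - 2 ≤ x) (hpos : 0 < psiFun x y) :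
    ∃ a b c, SodVertex (a,b,c) ∧ 0 ≤ c ∧ c ≤ 2 ∧ 0 ≤ b ∧ 0 ≤ a ∧ b - 2 ≤ a ∧
      (x-a)^2 + (y-b)^2 + (z-c)^2 = 2 ∧ psiFun a b = psiFun x y - 1 := by
  obtain ⟨p1,p2,p3,p4,p5,p6⟩ := hv
  simp only at p1 p2 p3 p4 p5 p6
  rcases (by omega : z = 0 ∨ z = 1 ∨ z = 2) with hz|hz|hz <;> subst hz <;>
    rcases (by omega : x%4 = 0 ∨ x%4 = 1 ∨ x%4 = 2 ∨ x%4 = 3) with hx4|hx4|hx4|hx4 <;>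
    rcases (by omega : y%4 = 0 ∨ y%4 = 1 ∨ y%4 = 2 ∨ y%4 = 3) with hy4|hy4|hy4|hy4
  · exfalso; omega
  · exfalso; omega
  · exfalso; omega
  · exfalso; omega
  · exfalso; omega
  · exfalso; omega
  · -- z=0 x%4=1 y%4=2
    refine ⟨x-1, y, 1, sodVertex_mk _ _ _ (by omega) (by omega) (by omega) (by omega) (by omega) (by omega),
      by omega, by omega, by omega, by omega, by omega, by ring,
      by unfold psiFun svFun; split_ifs <;> omega⟩
  · exfalso; omega
  · exfalso; omega
  · -- z=0 x%4=2 y%4=1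
    refine ⟨x-1, y+1, 0, sodVertex_mk _ _ _ (by omega) (by omega) (by omega) (by omega) (by omega) (by omega),
      by omega, by omega, by omega, by omega, by omega, by ring,
      by unfold psiFun svFun; split_ifs <;> omega⟩
  · exfalso; omega
  · -- z=0 x%4=2 y%4=3
    refine ⟨x-1, y-1, 0, sodVertex_mk _ _ _ (by omega) (by omega) (by omega) (by omega) (by omega) (by omega),
      by omega, by omega, by omega, by omega, by omega, by ring,
      by unfold psiFun svFun; split_ifs <;> omega⟩
  · exfalso; omega
  · exfalso; omega
  · -- z=0 x%4=3 y%4=2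
    refine ⟨x-1, y+1, 0, sodVertex_mk _ _ _ (by omega) (by omega) (by omega) (by omega) (by omega) (by omega),
      by omega, by omega, by omega, by omega, by omega, by ring,
      by unfold psiFun svFun; split_ifs <;> omega⟩
  · exfalso; omega
  · exfalso; omega
  · exfalso; omega
  · -- z=1 x%4=0 y%4=2
    by_cases hxy2 : x = y - 2
    · refine  ⟨x, y-1, 2, sodVertex_mk _ _ _ (by omega) (by omega) (by omega) (by omega) (by omega) (by omega),
      by omega, by omega, by omega, by omega, by omega, by ring,
      by unfold psiFun svFun; split_ifs <;> omega⟩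
    · refine  ⟨x-1, y, 0, sodVertex_mk _ _ _ (by omega) (by omega) (by omega) (by omega) (by omega) (by omega),
      by omega, by omega, by omega, by omega, by omega, by ring,
      by unfold psiFun svFun; split_ifs <;> omega⟩
  · exfalso; omega
  · exfalso; omega
  · exfalso; omega
  · exfalso; omega
  · exfalso; omega
  · -- z=1 x%4=2 y%4=0
    by_cases hxy2 : x = y - 2
    · refine  ⟨x, y-1, 0, sodVertex_mk _ _ _ (by omega) (by omega) (by omega) (by omega) (by omega) (by omega),
      by omega, by omega, by omega, by omega, by omega, by ring,
      by unfold psiFun svFun; split_ifs <;> omega⟩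
    · refine  ⟨x-1, y, 2, sodVertex_mk _ _ _ (by omega) (by omega) (by omega) (by omega) (by omega) (by omega),
      by omega, by omega, by omega, by omega, by omega, by ring,
      by unfold psiFun svFun; split_ifs <;> omega⟩
  · exfalso; omega
  · exfalso; omega
  · exfalso; omega
  · exfalso; omega
  · exfalso; omega
  · exfalso; omega
  · exfalso; omega
  · exfalso; omega
  · -- z=2 x%4=0 y%4=1
    have hx1 : 1 ≤ x := by unfold psiFun svFun at hpos; split_ifs at hpos <;> omega
    refine ⟨x-1, y-1, 2, sodVertex_mk _ _ _ (by omega) (by omega) (by omega) (by omega) (by omega) (by omega),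
      by omega, by omega, by omega, by omega, by omega, by ring,
      by unfold psiFun svFun; split_ifs <;> omega⟩
  · exfalso; omega
  · -- z=2 x%4=0 y%4=3
    refine ⟨x-1, y+1, 2, sodVertex_mk _ _ _ (by omega) (by omega) (by omega) (by omega) (by omega) (by omega),
      by omega, by omega, by omega, by omega, by omega, by ring,
      by unfold psiFun svFun; split_ifs <;> omega⟩
  · -- z=2 x%4=1 y%4=0
    refine ⟨x-1, y+1, 2, sodVertex_mk _ _ _ (by omega) (by omega) (by omega) (by omega) (by omega) (by omega),
      by omega, by omega, by omega, by omega, by omega, by ring,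
      by unfold psiFun svFun; split_ifs <;> omega⟩
  · exfalso; omega
  · exfalso; omega
  · exfalso; omega
  · exfalso; omega
  · exfalso; omega
  · exfalso; omega
  · exfalso; omega
  · -- z=2 x%4=3 y%4=0
    refine ⟨x-1, y, 1, sodVertex_mk _ _ _ (by omega) (by omega) (by omega) (by omega) (by omega) (by omega),
      by omega, by omega, by omega, by omega, by omega, by ring,
      by unfold psiFun svFun; split_ifs <;> omega⟩
  · exfalso; omega
  · exfalso; omega
  · exfalso; omega

def Psi (P : SodVert) : ℤ := psiFun P.1.1 P.1.2.1

lemma psi_walk {u v : SodVert} (w : sodaliteGraph.Walk u v) :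
    Psi v ≤ Psi u + w.length := by
  induction w with
  | nil => simp
  | @cons a b c h w ih =>
    obtain ⟨⟨x1,y1,z1⟩, hp⟩ := a
    obtain ⟨⟨x2,y2,z2⟩, hq⟩ := b
    have h2 : (x1 - x2)^2 + (y1 - y2)^2 + (z1 - z2)^2 = 2 := h
    have hl := psiFun_lip x1 y1 z1 x2 y2 z2 hp hq h2
    have : (SimpleGraph.Walk.cons h w).length = w.length + 1 :=
      SimpleGraph.Walk.length_cons _ _
    rw [this]
    simp only [Psi] at *
    push_cast
    omega

lemma walk_up (n : ℕ) : ∀ (x y z : ℤ) (hv : SodVertex (x,y,z)), 0 ≤ z → z ≤ 2 →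
    0 ≤ y → 0 ≤ x → y - 2 ≤ x → psiFun x y = (n : ℤ) →
    ∃ w : sodaliteGraph.Walk sodO ⟨(x,y,z),hv⟩, w.length = n := by
  induction n with
  | zero =>
    intro x y z hv hz0 hz2 hy0 hx0 hyx hpsi
    have hcoords : x = 0 ∧ y = 1 ∧ z = 2 := by
      obtain ⟨p1,p2,p3,p4,p5,p6⟩ := hv
      simp only at p1 p2 p3 p4 p5 p6
      unfold psiFun svFun at hpsi
      split_ifs at hpsi <;> omega
    obtain ⟨hx, hy, hz⟩ := hcoords
    subst hx; subst hy; subst hz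
    exact ⟨SimpleGraph.Walk.nil, rfl⟩
  | succ n ih =>
    intro x y z hv hz0 hz2 hy0 hx0 hyx hpsi
    have hpos : 0 < psiFun x y := by omega
    obtain ⟨a, b, c, hq, hc0, hc2, hb0, ha0, hba, hsq, hpsi'⟩ :=
      descent x y z hv hz0 hz2 hy0 hx0 hyx hpos
    have hpsin : psiFun a b = (n : ℤ) := by push_cast at hpsi ⊢; omega
    obtain ⟨w, hw⟩ := ih a b c hq hc0 hc2 hb0 ha0 hba hpsin
    have hadj : sodaliteGraph.Adj ⟨(a,b,c),hq⟩ ⟨(x,y,z),hv⟩ := by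
      show sqDist (a,b,c) (x,y,z) = 2
      unfold sqDist
      simp only
      linear_combination hsq
    exact ⟨w.concat hadj, by rw [SimpleGraph.Walk.length_concat, hw]⟩

lemma psiFun_nonneg (x y : ℤ) (hy0 : 0 ≤ y) (hx0 : 0 ≤ x) : 0 ≤ psiFun x y := by
  unfold psiFun svFun; split_ifs <;> omega

lemma psi_sodO : Psi sodO = 0 := by
  show psiFun 0 1 = 0
  unfold psiFun svFun
  split_ifs <;> omega

lemma dist_plane (x y : ℤ) (hv : SodVertex (x,y,0)) (hxy : y ≤ x) (hy0 : 0 ≤ y) :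
    (sodaliteGraph.dist sodO ⟨(x,y,0),hv⟩ : ℤ) = psiFun x y := by
  have hx0 : 0 ≤ x := le_trans hy0 hxy
  have h0 : 0 ≤ psiFun x y := psiFun_nonneg x y hy0 hx0
  obtain ⟨m, hm⟩ : ∃ m : ℕ, psiFun x y = (m : ℤ) := ⟨(psiFun x y).toNat, by omega⟩
  obtain ⟨w, hw⟩ := walk_up m x y 0 hv le_rfl (by norm_num) hy0 hx0 (by omega) hm
  have hub : sodaliteGraph.dist sodO ⟨(x,y,0),hv⟩ ≤ m := hw ▸ SimpleGraph.dist_le w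
  have hr : sodaliteGraph.Reachable sodO ⟨(x,y,0),hv⟩ := ⟨w⟩
  obtain ⟨w', hw'⟩ := hr.exists_walk_length_eq_dist
  have hlb := psi_walk w'
  rw [psi_sodO, hw'] at hlb
  have : Psi (⟨(x,y,0),hv⟩ : SodVert) = psiFun x y := rfl
  rw [this] at hlb
  omega

def Aset (n : ℤ) : Set SodVert :=
  {P | (dis P : ℤ) = n ∧ P.1.2.1 ≤ P.1.1 ∧ 0 ≤ P.1.2.1 ∧ P.1.2.2 = 0}
def Bset (n : ℤ) : Set SodVert :=
  {P | (dis P : ℤ) = n ∧ inU P.1 ∧ P.1.2.2 = 0 ∧ P.1.1 - 4 < P.1.2.1}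

lemma set1_eq (n : ℤ) :
    {P : SodVert | (dis P : ℤ) = n ∧ inU P.1 ∧ P.1.1 * P.1.2.1 * P.1.2.2 = 0} = Aset n := by
  ext ⟨⟨x,y,z⟩,hv⟩
  simp only [Set.mem_setOf_eq, Aset, inU]
  constructor
  · rintro ⟨hd, ⟨u1,u2,u3⟩, hp⟩
    try simp only at u1 u2 u3 hp ⊢
    refine ⟨hd, u1, by omega, ?_⟩
    rcases mul_eq_zero.mp hp with h | h
    · rcases mul_eq_zero.mp h with h' | h'
      · exfalso; obtain ⟨p1,_⟩ := hv; simp only at p1; omega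
      · omega
    · exact h
  · rintro ⟨hd, h1, h2, h3⟩
    try simp only at h1 h2 h3 ⊢
    exact ⟨hd, ⟨h1, by omega, by omega⟩, by rw [h3]; ring⟩

lemma shift_vertex (x y z : ℤ) (h : SodVertex (x,y,z)) : SodVertex (x+4,y,z) := by
  obtain ⟨p1,p2,p3,p4,p5,p6⟩ := h
  try simp only at p1 p2 p3 p4 p5 p6
  exact sodVertex_mk _ _ _ (by omega) (by omega) (by omega) (by omega) (by omega) (by omega)

lemma unshift_vertex (x y z : ℤ) (h : SodVertex (x,y,z)) : SodVertex (x-4,y,z) := by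
  obtain ⟨p1,p2,p3,p4,p5,p6⟩ := h
  try simp only at p1 p2 p3 p4 p5 p6
  exact sodVertex_mk _ _ _ (by omega) (by omega) (by omega) (by omega) (by omega) (by omega)

def Tup : SodVert → SodVert := fun P =>
  ⟨(P.1.1 + 4, P.1.2.1, P.1.2.2), by
    obtain ⟨⟨x,y,z⟩,hv⟩ := P
    exact shift_vertex x y z hv⟩

lemma Tup_inj : Function.Injective Tup := by
  rintro ⟨⟨x,y,z⟩,hv⟩ ⟨⟨a,b,c⟩,hw⟩ h
  have h' : ((x+4 : ℤ), y, z) = ((a+4 : ℤ), b, c) := congrArg Subtype.val h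
  simp only [Prod.mk.injEq] at h'
  apply Subtype.ext
  simp only [Prod.mk.injEq]
  exact ⟨by omega, h'.2⟩

lemma psiFun_shift (x y : ℤ) : psiFun (x+4) y = psiFun x y + 4 := by
  unfold psiFun svFun; split_ifs <;> omega

lemma finAset (n : ℤ) : (Aset n).Finite := by
  apply Set.Finite.subset
    (Set.Finite.preimage Set.injOn_subtype_val
      (Finset.finite_toSet (Finset.Icc ((0:ℤ),(0:ℤ),(0:ℤ)) (n+1,n+1,0))))
  rintro ⟨⟨x,y,z⟩,hv⟩ ⟨hd, h1, h2, h3⟩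
  try simp only at h1 h2 h3
  subst h3
  have hda := dist_plane x y hv h1 h2
  simp only [Set.mem_preimage, Finset.coe_Icc, Set.mem_Icc]
  have hpsi : psiFun x y = n := by rw [← hda]; exact hd
  have hb : x ≤ n + 1 := by
    unfold psiFun svFun at hpsi; split_ifs at hpsi <;> omega
  constructor
  · exact ⟨by omega, by simp only; exact ⟨by omega, le_rfl⟩⟩
  · exact ⟨by omega, by simp only; exact ⟨by omega, le_rfl⟩⟩

lemma dis_Tup (a b : ℤ) (hw : SodVertex (a,b,0)) (h1 : b ≤ a) (h2 : 0 ≤ b) :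
    (dis (Tup ⟨(a,b,0),hw⟩) : ℤ) = (dis ⟨(a,b,0),hw⟩ : ℤ) + 4 := by
  have hQ : (dis ⟨(a,b,0),hw⟩ : ℤ) = psiFun a b := dist_plane a b hw h1 h2
  have hv2 : SodVertex (a+4,b,0) := shift_vertex a b 0 hw
  have hP : (dis ⟨(a+4,b,0),hv2⟩ : ℤ) = psiFun (a+4) b :=
    dist_plane (a+4) b hv2 (by omega) h2
  have hT : dis (Tup ⟨(a,b,0),hw⟩) = dis ⟨(a+4,b,0),hv2⟩ := rfl
  rw [hT, hP, hQ, psiFun_shift]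

lemma Aset_split (n : ℤ) : Aset n = Bset n ∪ Tup '' (Aset (n-4)) := by
  ext P
  obtain ⟨⟨x,y,z⟩,hv⟩ := P
  simp only [Aset, Bset, Set.mem_union, Set.mem_image, Set.mem_setOf_eq, inU]
  constructor
  · rintro ⟨hd, h1, h2, h3⟩
    try simp only at h1 h2 h3
    subst h3
    by_cases hlt : x - 4 < y
    · left; exact ⟨hd, ⟨h1, h2, le_rfl⟩, rfl, hlt⟩
    · right
      push_neg at hlt
      have hv' : SodVertex (x-4, y, 0) := unshift_vertex x y 0 hv
      have hT : Tup ⟨(x-4,y,0),hv'⟩ = (⟨(x,y,0),hv⟩ : SodVert) := by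
        apply Subtype.ext
        show ((x-4+4 : ℤ), y, (0:ℤ)) = (x, y, 0)
        norm_num
      have hDT := dis_Tup (x-4) y hv' (by omega) h2
      rw [hT] at hDT
      refine ⟨⟨(x-4, y, 0), hv'⟩, ⟨?_, ?_, ?_, rfl⟩, hT⟩
      · show (dis ⟨(x-4,y,0),hv'⟩ : ℤ) = n - 4
        omega
      · show y ≤ x - 4
        omega
      · show (0:ℤ) ≤ y
        omega
  · rintro (⟨hd, hu, hz, hlt⟩ | ⟨Q, hmem, him⟩)
    · exact ⟨hd, hu.1, le_trans hu.2.2 hu.2.1, hz⟩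
    · obtain ⟨⟨a,b,c⟩,hw⟩ := Q
      obtain ⟨hd, h1, h2, h3⟩ := hmem
      have h1' : b ≤ a := h1
      have h2' : (0:ℤ) ≤ b := h2
      have h3' : c = 0 := h3
      subst h3'
      have hDT := dis_Tup a b hw h1' h2'
      have hc : ((a+4:ℤ), b, (0:ℤ)) = (x,y,z) := congrArg Subtype.val him
      simp only [Prod.mk.injEq] at hc
      refine ⟨?_, by show y ≤ x; omega, by show (0:ℤ) ≤ y; omega, by show z = 0; omega⟩
      rw [← him]
      show (dis (Tup ⟨(a,b,0),hw⟩) : ℤ) = n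
      omega

lemma Bset_sub (n : ℤ) : Bset n ⊆ Aset n := by
  rintro P ⟨hd, hu, hz, hlt⟩
  exact ⟨hd, hu.1, le_trans hu.2.2 hu.2.1, hz⟩

lemma Aset_disj (n : ℤ) : Disjoint (Bset n) (Tup '' (Aset (n-4))) := by
  rw [Set.disjoint_left]
  rintro ⟨⟨x,y,z⟩,hv⟩ ⟨hd, hu, hz, hlt⟩ ⟨⟨⟨a,b,c⟩,hw⟩, ⟨hd',h1',h2',h3'⟩, him⟩
  have hlt' : x - 4 < y := hlt
  have h1'' : b ≤ a := h1'
  have hcoord : ((a+4 : ℤ), b, c) = (x, y, z) := congrArg Subtype.val him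
  simp only [Prod.mk.injEq] at hcoord
  omega


/-- Eventually, `S̄₁(n) = S̄₁(n-4) + S̄₀(n)`. -/
theorem sodalite_Sbar1_recurrence :
    ∃ N : ℤ, ∀ n : ℤ, N ≤ n → Sbar1 n = Sbar1 (n - 4) + Sbar0 n := by
  refine ⟨0, fun n _ => ?_⟩
  have e1 : Sbar1 n = (Aset n).ncard := by unfold Sbar1; rw [set1_eq]
  have e2 : Sbar1 (n-4) = (Aset (n-4)).ncard := by unfold Sbar1; rw [set1_eq]
  have e0 : Sbar0 n = (Bset n).ncard := rfl
  rw [e1, e2, e0, Aset_split n,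
    Set.ncard_union_eq (Aset_disj n) ((finAset n).subset (Bset_sub n))
      ((finAset (n-4)).image Tup),
    Set.ncard_image_of_injective _ Tup_inj]
  omega
end

section
/- There exists an integer N such that for every integer n ≥ N, S̄₀(n) = S̄₀(n−6); consequently S̄₀ is eventually periodic with period 6. -/
set_option maxHeartbeats 4000000





-- auxiliary
def uFun (y : ℤ) : ℤ := if y % 4 = 1 then 1 else if y % 4 = 3 then -1 else 0
def vFun (x : ℤ) : ℤ := if x % 4 = 0 then 1 else if x % 4 = 2 then -1 else 0
def F2 (p : ℤ × ℤ × ℤ) : ℤ := 2 * p.1 + p.2.1 - uFun p.2.1 * vFun p.1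

-- the four vertex families
def vA (k : ℕ) : SodVert := ⟨(4*(k:ℤ)+2, 4*(k:ℤ)+1, 0), by unfold SodVertex; dsimp only; omega⟩
def vB (k : ℕ) : SodVert := ⟨(4*(k:ℤ)+3, 4*(k:ℤ)+2, 0), by unfold SodVertex; dsimp only; omega⟩
def vC (k : ℕ) : SodVert := ⟨(4*(k:ℤ)+5, 4*(k:ℤ)+2, 0), by unfold SodVertex; dsimp only; omega⟩
def vD (k : ℕ) : SodVert := ⟨(4*(k:ℤ)+6, 4*(k:ℤ)+3, 0), by unfold SodVertex; dsimp only; omega⟩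
def vM1 (k : ℕ) : SodVert := ⟨(4*(k:ℤ)+4, 4*(k:ℤ)+2, 1), by unfold SodVertex; dsimp only; omega⟩
def vM2 (k : ℕ) : SodVert := ⟨(4*(k:ℤ)+6, 4*(k:ℤ)+4, 1), by unfold SodVertex; dsimp only; omega⟩
def v1 : SodVert := ⟨(1, 0, 2), by decide⟩
def v2 : SodVert := ⟨(2, 0, 1), by decide⟩

lemma adjO1 : sodaliteGraph.Adj sodO v1 := by show sqDist _ _ = 2; decide
lemma adj12 : sodaliteGraph.Adj v1 v2 := by show sqDist _ _ = 2; decide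
lemma adj2A : sodaliteGraph.Adj v2 (vA 0) := by show sqDist _ _ = 2; decide
lemma adjAB (k : ℕ) : sodaliteGraph.Adj (vA k) (vB k) := by
  show sqDist _ _ = 2; simp only [vA, vB, sqDist]; ring
lemma adjBM1 (k : ℕ) : sodaliteGraph.Adj (vB k) (vM1 k) := by
  show sqDist _ _ = 2; simp only [vB, vM1, sqDist]; ring
lemma adjM1C (k : ℕ) : sodaliteGraph.Adj (vM1 k) (vC k) := by
  show sqDist _ _ = 2; simp only [vM1, vC, sqDist]; ring
lemma adjCD (k : ℕ) : sodaliteGraph.Adj (vC k) (vD k) := by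
  show sqDist _ _ = 2; simp only [vC, vD, sqDist]; ring
lemma adjDM2 (k : ℕ) : sodaliteGraph.Adj (vD k) (vM2 k) := by
  show sqDist _ _ = 2; simp only [vD, vM2, sqDist]; ring
lemma adjM2A (k : ℕ) : sodaliteGraph.Adj (vM2 k) (vA (k+1)) := by
  show sqDist _ _ = 2; simp only [vM2, vA, sqDist]; push_cast; ring

lemma walkA : ∀ k : ℕ, ∃ w : sodaliteGraph.Walk sodO (vA k), w.length = 6*k+3 := by
  intro k
  induction k with
  | zero => exact ⟨.cons adjO1 (.cons adj12 (.cons adj2A .nil)), by simp⟩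
  | succ k ih =>
    obtain ⟨w, hw⟩ := ih
    refine ⟨w.append (.cons (adjAB k) (.cons (adjBM1 k) (.cons (adjM1C k)
      (.cons (adjCD k) (.cons (adjDM2 k) (.cons (adjM2A k) .nil)))))), ?_⟩
    simp only [SimpleGraph.Walk.length_append, SimpleGraph.Walk.length_cons,
      SimpleGraph.Walk.length_nil, hw]
    omega

lemma walkB (k : ℕ) : ∃ w : sodaliteGraph.Walk sodO (vB k), w.length = 6*k+4 := by
  obtain ⟨w, hw⟩ := walkA k
  exact ⟨w.append (.cons (adjAB k) .nil), by simp only [SimpleGraph.Walk.length_append, SimpleGraph.Walk.length_cons, SimpleGraph.Walk.length_nil, hw]⟩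

lemma walkC (k : ℕ) : ∃ w : sodaliteGraph.Walk sodO (vC k), w.length = 6*k+6 := by
  obtain ⟨w, hw⟩ := walkB k
  refine ⟨w.append (.cons (adjBM1 k) (.cons (adjM1C k) .nil)), ?_⟩
  simp only [SimpleGraph.Walk.length_append, SimpleGraph.Walk.length_cons,
    SimpleGraph.Walk.length_nil, hw]

lemma walkD (k : ℕ) : ∃ w : sodaliteGraph.Walk sodO (vD k), w.length = 6*k+7 := by
  obtain ⟨w, hw⟩ := walkC k
  exact ⟨w.append (.cons (adjCD k) .nil), by simp only [SimpleGraph.Walk.length_append, SimpleGraph.Walk.length_cons, SimpleGraph.Walk.length_nil, hw]⟩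

lemma F2_step (p q : ℤ × ℤ × ℤ) (hp : SodVertex p) (hq : SodVertex q)
    (h : sqDist p q = 2) : F2 q ≤ F2 p + 2 := by
  obtain ⟨a, b, c⟩ := p
  obtain ⟨d, e, f⟩ := q
  simp only [sqDist] at h
  obtain ⟨hp1, hp2, hp3, hp4, hp5, hp6⟩ := hp
  obtain ⟨hq1, hq2, hq3, hq4, hq5, hq6⟩ := hq
  simp only at *
  have h1 : -1 ≤ a - d ∧ a - d ≤ 1 := by
    constructor <;> nlinarith [sq_nonneg (b - e), sq_nonneg (c - f)]
  have h2 : -1 ≤ b - e ∧ b - e ≤ 1 := by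
    constructor <;> nlinarith [sq_nonneg (a - d), sq_nonneg (c - f)]
  have h3 : -1 ≤ c - f ∧ c - f ≤ 1 := by
    constructor <;> nlinarith [sq_nonneg (a - d), sq_nonneg (b - e)]
  simp only [F2, uFun, vFun]
  split_ifs <;> omega

lemma F2_walk {P Q : SodVert} (w : sodaliteGraph.Walk P Q) :
    F2 Q.1 ≤ F2 P.1 + 2 * (w.length : ℤ) := by
  induction w with
  | nil => simp
  | @cons u v r hadj w ih =>
    have h2 := F2_step u.1 v.1 u.2 v.2 hadj
    simp only [SimpleGraph.Walk.length_cons] at *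
    push_cast
    push_cast at ih
    omega

lemma F2_O : F2 sodO.1 = 0 := by decide

lemma dis_eq_of (P : SodVert) (m : ℕ) (w : sodaliteGraph.Walk sodO P)
    (hw : w.length = m) (hF : F2 P.1 = 2 * (m : ℤ)) : dis P = m := by
  have hle : dis P ≤ m := hw ▸ SimpleGraph.dist_le w
  have hr : sodaliteGraph.Reachable sodO P := ⟨w⟩
  obtain ⟨w', hw'⟩ := hr.exists_walk_length_eq_dist
  have := F2_walk w'
  rw [F2_O, hw'] at this
  unfold dis at *
  omega

lemma disA (k : ℕ) : dis (vA k) = 6*k+3 := by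
  obtain ⟨w, hw⟩ := walkA k
  refine dis_eq_of _ _ w hw ?_
  simp only [vA, F2, uFun, vFun]
  have h1 : (4*(k:ℤ)+1) % 4 = 1 := by omega
  have h2 : (4*(k:ℤ)+2) % 4 = 2 := by omega
  push_cast; simp [h1, h2] <;> omega

lemma disB (k : ℕ) : dis (vB k) = 6*k+4 := by
  obtain ⟨w, hw⟩ := walkB k
  refine dis_eq_of _ _ w hw ?_
  simp only [vB, F2, uFun, vFun]
  have h1 : (4*(k:ℤ)+2) % 4 = 2 := by omega
  have h2 : (4*(k:ℤ)+3) % 4 = 3 := by omega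
  push_cast; simp [h1, h2] <;> omega

lemma disC (k : ℕ) : dis (vC k) = 6*k+6 := by
  obtain ⟨w, hw⟩ := walkC k
  refine dis_eq_of _ _ w hw ?_
  simp only [vC, F2, uFun, vFun]
  have h1 : (4*(k:ℤ)+2) % 4 = 2 := by omega
  have h2 : (4*(k:ℤ)+5) % 4 = 1 := by omega
  push_cast; simp [h1, h2] <;> omega

lemma disD (k : ℕ) : dis (vD k) = 6*k+7 := by
  obtain ⟨w, hw⟩ := walkD k
  refine dis_eq_of _ _ w hw ?_
  simp only [vD, F2, uFun, vFun]
  have h1 : (4*(k:ℤ)+3) % 4 = 3 := by omega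
  have h2 : (4*(k:ℤ)+6) % 4 = 2 := by omega
  push_cast; simp [h1, h2] <;> omega

lemma stripMem (P : SodVert) (hu : inU P.1) (hz : P.1.2.2 = 0)
    (hxy : P.1.1 - 4 < P.1.2.1) :
    ∃ k : ℕ, P = vA k ∨ P = vB k ∨ P = vC k ∨ P = vD k := by
  obtain ⟨⟨x, y, z⟩, hv⟩ := P
  obtain ⟨h1, h2, h3, h4, h5, h6⟩ := hv
  obtain ⟨hu1, hu2, hu3⟩ := hu
  simp only at *
  subst hz
  simp only [Prod.fst, Prod.snd] at h1 h2 h3 h4 h5 h6 hu1 hu2 hu3 hxy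
  have hcase : (y = x - 1 ∧ x % 4 = 2) ∨ (y = x - 1 ∧ x % 4 = 3) ∨
      (y = x - 3 ∧ x % 4 = 1) ∨ (y = x - 3 ∧ x % 4 = 2 ∧ y % 4 = 3) := by omega
  rcases hcase with ⟨hy, hx⟩ | ⟨hy, hx⟩ | ⟨hy, hx⟩ | ⟨hy, hx, hy4⟩
  · exact ⟨((x - 2) / 4).toNat, Or.inl (Subtype.ext (by simp only [vA, Prod.mk.injEq, and_true]; omega))⟩
  · exact ⟨((x - 3) / 4).toNat, Or.inr (Or.inl (Subtype.ext (by simp only [vB, Prod.mk.injEq, and_true]; omega)))⟩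
  · exact ⟨((x - 5) / 4).toNat, Or.inr (Or.inr (Or.inl (Subtype.ext (by simp only [vC, Prod.mk.injEq, and_true]; omega))))⟩
  · exact ⟨((x - 6) / 4).toNat, Or.inr (Or.inr (Or.inr (Subtype.ext (by simp only [vD, Prod.mk.injEq, and_true]; omega))))⟩

lemma mem_cond (n : ℤ) (P : SodVert) :
    ((dis P : ℤ) = n ∧ inU P.1 ∧ P.1.2.2 = 0 ∧ P.1.1 - 4 < P.1.2.1) ↔
    (∃ k : ℕ, (P = vA k ∧ n = 6*(k:ℤ)+3) ∨ (P = vB k ∧ n = 6*(k:ℤ)+4) ∨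
      (P = vC k ∧ n = 6*(k:ℤ)+6) ∨ (P = vD k ∧ n = 6*(k:ℤ)+7)) := by
  constructor
  · rintro ⟨hd, hu, hz, hxy⟩
    obtain ⟨k, hk⟩ := stripMem P hu hz hxy
    refine ⟨k, ?_⟩
    rcases hk with rfl | rfl | rfl | rfl
    · exact Or.inl ⟨rfl, by rw [disA] at hd; push_cast at hd; omega⟩
    · exact Or.inr (Or.inl ⟨rfl, by rw [disB] at hd; push_cast at hd; omega⟩)
    · exact Or.inr (Or.inr (Or.inl ⟨rfl, by rw [disC] at hd; push_cast at hd; omega⟩))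
    · exact Or.inr (Or.inr (Or.inr ⟨rfl, by rw [disD] at hd; push_cast at hd; omega⟩))
  · rintro ⟨k, hk⟩
    rcases hk with ⟨rfl, rfl⟩ | ⟨rfl, rfl⟩ | ⟨rfl, rfl⟩ | ⟨rfl, rfl⟩
    · exact ⟨by rw [disA]; push_cast; ring,
        by simp only [vA, inU]; omega, by simp only [vA], by simp only [vA]; omega⟩
    · exact ⟨by rw [disB]; push_cast; ring,
        by simp only [vB, inU]; omega, by simp only [vB], by simp only [vB]; omega⟩
    · exact ⟨by rw [disC]; push_cast; ring,
        by simp only [vC, inU]; omega, by simp only [vC], by simp only [vC]; omega⟩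
    · exact ⟨by rw [disD]; push_cast; ring,
        by simp only [vD, inU]; omega, by simp only [vD], by simp only [vD]; omega⟩

lemma sbar0_val (n : ℤ) (hn : 3 ≤ n) :
    Sbar0 n = if n % 6 = 2 ∨ n % 6 = 5 then 0 else 1 := by
  unfold Sbar0
  by_cases h25 : n % 6 = 2 ∨ n % 6 = 5
  · rw [if_pos h25]
    have hset : {P : SodVert | (dis P : ℤ) = n ∧ inU P.1 ∧ P.1.2.2 = 0 ∧
        P.1.1 - 4 < P.1.2.1} = (∅ : Set SodVert) := by
      ext P
      simp only [Set.mem_setOf_eq, Set.mem_empty_iff_false, iff_false]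
      intro hm
      obtain ⟨k, hk⟩ := (mem_cond n P).mp hm
      rcases hk with ⟨-, h⟩ | ⟨-, h⟩ | ⟨-, h⟩ | ⟨-, h⟩ <;> omega
    rw [hset, Set.ncard_empty]
  · rw [if_neg h25]
    have hr : n % 6 = 0 ∨ n % 6 = 1 ∨ n % 6 = 3 ∨ n % 6 = 4 := by omega
    rcases hr with hr | hr | hr | hr
    · have hset : {P : SodVert | (dis P : ℤ) = n ∧ inU P.1 ∧ P.1.2.2 = 0 ∧
          P.1.1 - 4 < P.1.2.1} = {vC ((n-6)/6).toNat} := by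
        ext P
        simp only [Set.mem_setOf_eq, Set.mem_singleton_iff]
        rw [mem_cond n P]
        constructor
        · rintro ⟨k, ⟨rfl, h⟩ | ⟨rfl, h⟩ | ⟨rfl, h⟩ | ⟨rfl, h⟩⟩
          · omega
          · omega
          · have : k = ((n-6)/6).toNat := by omega
            rw [this]
          · omega
        · rintro rfl
          exact ⟨((n-6)/6).toNat, Or.inr (Or.inr (Or.inl ⟨rfl, by omega⟩))⟩
      rw [hset, Set.ncard_singleton]
    · have hset : {P : SodVert | (dis P : ℤ) = n ∧ inU P.1 ∧ P.1.2.2 = 0 ∧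
          P.1.1 - 4 < P.1.2.1} = {vD ((n-7)/6).toNat} := by
        ext P
        simp only [Set.mem_setOf_eq, Set.mem_singleton_iff]
        rw [mem_cond n P]
        constructor
        · rintro ⟨k, ⟨rfl, h⟩ | ⟨rfl, h⟩ | ⟨rfl, h⟩ | ⟨rfl, h⟩⟩
          · omega
          · omega
          · omega
          · have : k = ((n-7)/6).toNat := by omega
            rw [this]
        · rintro rfl
          exact ⟨((n-7)/6).toNat, Or.inr (Or.inr (Or.inr ⟨rfl, by omega⟩))⟩
      rw [hset, Set.ncard_singleton]
    · have hset : {P : SodVert | (dis P : ℤ) = n ∧ inU P.1 ∧ P.1.2.2 = 0 ∧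
          P.1.1 - 4 < P.1.2.1} = {vA ((n-3)/6).toNat} := by
        ext P
        simp only [Set.mem_setOf_eq, Set.mem_singleton_iff]
        rw [mem_cond n P]
        constructor
        · rintro ⟨k, ⟨rfl, h⟩ | ⟨rfl, h⟩ | ⟨rfl, h⟩ | ⟨rfl, h⟩⟩
          · have : k = ((n-3)/6).toNat := by omega
            rw [this]
          · omega
          · omega
          · omega
        · rintro rfl
          exact ⟨((n-3)/6).toNat, Or.inl ⟨rfl, by omega⟩⟩
      rw [hset, Set.ncard_singleton]
    · have hset : {P : SodVert | (dis P : ℤ) = n ∧ inU P.1 ∧ P.1.2.2 = 0 ∧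
          P.1.1 - 4 < P.1.2.1} = {vB ((n-4)/6).toNat} := by
        ext P
        simp only [Set.mem_setOf_eq, Set.mem_singleton_iff]
        rw [mem_cond n P]
        constructor
        · rintro ⟨k, ⟨rfl, h⟩ | ⟨rfl, h⟩ | ⟨rfl, h⟩ | ⟨rfl, h⟩⟩
          · omega
          · have : k = ((n-4)/6).toNat := by omega
            rw [this]
          · omega
          · omega
        · rintro rfl
          exact ⟨((n-4)/6).toNat, Or.inr (Or.inl ⟨rfl, by omega⟩)⟩
      rw [hset, Set.ncard_singleton]


/-- Eventually, `S̄₀(n) = S̄₀(n-6)`: `S̄₀` is eventually periodic with period 6. -/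
theorem sodalite_Sbar0_periodic :
    ∃ N : ℤ, ∀ n : ℤ, N ≤ n → Sbar0 n = Sbar0 (n - 6) := by
  refine ⟨9, fun n hn => ?_⟩
  rw [sbar0_val n (by omega), sbar0_val (n-6) (by omega),
    show (n-6) % 6 = n % 6 by omega]
end

section
/- Every vertex of the sodalite graph has degree exactly 4: for each P ∈ V, the set {Q ∈ V : the squared Euclidean distance from P to Q equals 2} has exactly 4 elements. -/
/-- The 12 possible offsets realizing squared distance 2. -/
def offs : Finset (ℤ × ℤ × ℤ) :=
  {(1,1,0),(1,-1,0),(-1,1,0),(-1,-1,0),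
   (1,0,1),(1,0,-1),(-1,0,1),(-1,0,-1),
   (0,1,1),(0,1,-1),(0,-1,1),(0,-1,-1)}

lemma sqDist_eq_two_iff (p q : ℤ × ℤ × ℤ) :
    sqDist p q = 2 ↔ ∃ d ∈ offs, q = p + d := by
  obtain ⟨x, y, z⟩ := p; obtain ⟨a, b, c⟩ := q
  constructor
  · intro h
    obtain ⟨u, rfl⟩ : ∃ u, a = x + u := ⟨a - x, by ring⟩
    obtain ⟨v, rfl⟩ : ∃ v, b = y + v := ⟨b - y, by ring⟩
    obtain ⟨w, rfl⟩ : ∃ w, c = z + w := ⟨c - z, by ring⟩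
    simp only [sqDist] at h
    have h2 : u ^ 2 + v ^ 2 + w ^ 2 = 2 := by ring_nf at h ⊢; linarith
    refine ⟨(u, v, w), ?_, by simp [Prod.ext_iff]⟩
    have hu : -1 ≤ u ∧ u ≤ 1 := by
      constructor <;> nlinarith [sq_nonneg v, sq_nonneg w]
    have hv : -1 ≤ v ∧ v ≤ 1 := by
      constructor <;> nlinarith [sq_nonneg u, sq_nonneg w]
    have hw : -1 ≤ w ∧ w ≤ 1 := by
      constructor <;> nlinarith [sq_nonneg u, sq_nonneg v]
    obtain ⟨hu1, hu2⟩ := hu; obtain ⟨hv1, hv2⟩ := hv; obtain ⟨hw1, hw2⟩ := hw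
    interval_cases u <;> interval_cases v <;> interval_cases w <;>
      revert h2 <;> decide
  · rintro ⟨d, hd, h⟩
    rw [h]
    obtain ⟨e, f, g⟩ := d
    have heq : sqDist (x, y, z) ((x, y, z) + (e, f, g)) = e ^ 2 + f ^ 2 + g ^ 2 := by
      simp only [sqDist, Prod.mk_add_mk]
      ring
    rw [heq]
    simp only [offs, Finset.mem_insert, Finset.mem_singleton, Prod.mk.injEq] at hd
    rcases hd with h'|h'|h'|h'|h'|h'|h'|h'|h'|h'|h'|h' <;>
      obtain ⟨rfl, rfl, rfl⟩ := h' <;> norm_num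

lemma dvd_mod_add (a b a' b' : ℤ) (ha : a % 4 = a' % 4) (hb : b % 4 = b' % 4) :
    (4 ∣ a + b) ↔ (4 ∣ a' + b') := by omega

lemma dvd_mod_sub (a b a' b' : ℤ) (ha : a % 4 = a' % 4) (hb : b % 4 = b' % 4) :
    (4 ∣ a - b) ↔ (4 ∣ a' - b') := by omega

lemma sod_mod (x y z x' y' z' : ℤ) (hx : x % 4 = x' % 4) (hy : y % 4 = y' % 4)
    (hz : z % 4 = z' % 4) : SodVertex (x, y, z) ↔ SodVertex (x', y', z') := by
  simp only [SodVertex]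
  rw [dvd_mod_add x y x' y' hx hy, dvd_mod_sub x y x' y' hx hy,
      dvd_mod_add y z y' z' hy hz, dvd_mod_sub y z y' z' hy hz,
      dvd_mod_add z x z' x' hz hx, dvd_mod_sub z x z' x' hz hx]

lemma filter_card_four (x y z : ℤ) (hp : SodVertex (x, y, z)) :
    ((offs.filter (fun d => SodVertex ((x, y, z) + d))).card) = 4 := by
  have key : ∀ d ∈ offs,
      (SodVertex ((x, y, z) + d) ↔ SodVertex ((x % 4, y % 4, z % 4) + d)) := by
    rintro ⟨a, b, c⟩ _
    simp only [Prod.mk_add_mk]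
    exact sod_mod _ _ _ _ _ _ (by omega) (by omega) (by omega)
  rw [Finset.filter_congr key]
  have hp' : SodVertex (x % 4, y % 4, z % 4) :=
    (sod_mod x y z (x % 4) (y % 4) (z % 4) (by omega) (by omega) (by omega)).mp hp
  have hx1 : 0 ≤ x % 4 := Int.emod_nonneg x (by norm_num)
  have hx2 : x % 4 < 4 := Int.emod_lt_of_pos x (by norm_num)
  have hy1 : 0 ≤ y % 4 := Int.emod_nonneg y (by norm_num)
  have hy2 : y % 4 < 4 := Int.emod_lt_of_pos y (by norm_num)
  have hz1 : 0 ≤ z % 4 := Int.emod_nonneg z (by norm_num)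
  have hz2 : z % 4 < 4 := Int.emod_lt_of_pos z (by norm_num)
  generalize x % 4 = a at hp' hx1 hx2
  generalize y % 4 = b at hp' hy1 hy2
  generalize z % 4 = c at hp' hz1 hz2
  interval_cases a <;> interval_cases b <;> interval_cases c <;>
    revert hp' <;> decide

/-- Every vertex of the sodalite graph has exactly 4 neighbours. -/
theorem sodalite_degree_four (p : ℤ × ℤ × ℤ) (hp : SodVertex p) :
    Set.ncard {q : ℤ × ℤ × ℤ | SodVertex q ∧ sqDist p q = 2} = 4 := by
  have hset : {q : ℤ × ℤ × ℤ | SodVertex q ∧ sqDist p q = 2} =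
      ↑((offs.filter (fun d => SodVertex (p + d))).image (fun d => p + d)) := by
    ext q
    simp only [Set.mem_setOf_eq, Finset.coe_image, Set.mem_image, Finset.mem_coe,
      Finset.mem_filter, sqDist_eq_two_iff]
    constructor
    · rintro ⟨hq, d, hd, rfl⟩
      exact ⟨d, ⟨hd, hq⟩, rfl⟩
    · rintro ⟨d, ⟨hd, hq⟩, rfl⟩
      exact ⟨hq, d, hd, rfl⟩
  rw [hset, Set.ncard_coe_finset,
    Finset.card_image_of_injective _ (add_right_injective p)]
  obtain ⟨x, y, z⟩ := p
  exact filter_card_four x y z hp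
end
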